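/- For the k-price auction with 2 ≤ k ≤ n+1, there exists a pure-strategy Nash equilibrium in which agent i wins and pays p if and only if v_i > v_{n−(k−3)} and v_{n−(k−3)} ≤ p ≤ v_i (with v_{n+1} := 0; for k = n+1 the condition reads i = 1 and v_2 ≤ p ≤ v_1). -/

import Mathlib

open Classical

/-- The k-th highest bid (k counted from 1). -/
noncomputable def kthHighest {n : ℕ} (b : Fin n → ℝ) (k : ℕ) : ℝ :=
  ((List.ofFn b).mergeSort (fun x y => decide (y ≤ x))).getD (k - 1) 0

/-- Agent `i` wins: her bid is highest, with ties broken toward the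
agent with the highest valuation, i.e. (for strictly decreasing valuations)
the lowest index among the maximal bidders. -/
def wins {n : ℕ} (b : Fin n → ℝ) (i : Fin n) : Prop :=
  (∀ j, b j ≤ b i) ∧ ∀ j, b j = b i → i ≤ j

/-- The price paid by the winner in the k-price auction (2 ≤ k ≤ n), or in the
first-price auction (the case k = n+1), where the winner pays the highest bid. -/
noncomputable def price {n : ℕ} (k : ℕ) (b : Fin n → ℝ) : ℝ :=
  if k = n + 1 then kthHighest b 1 else kthHighest b k

/-- The winner gets her valuation minus the price; losers get 0. -/
noncomputable def utility {n : ℕ} (v : Fin n → ℝ) (k : ℕ) (b : Fin n → ℝ)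
    (i : Fin n) : ℝ :=
  if wins b i then v i - price k b else 0

/-- Pure-strategy Nash equilibrium with nonnegative bids: no agent can strictly
improve her utility by a unilateral deviation to another nonnegative bid. -/
def NashEq {n : ℕ} (v : Fin n → ℝ) (k : ℕ) (b : Fin n → ℝ) : Prop :=
  (∀ i, 0 ≤ b i) ∧
  ∀ i : Fin n, ∀ b' : ℝ, 0 ≤ b' →
    utility v k (Function.update b i b') i ≤ utility v k b i

/-- One-based valuation indexing, with the convention `v_{n+1} = 0`. -/
noncomputable def vIdx {n : ℕ} (v : Fin n → ℝ) (j : ℕ) : ℝ :=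
  if h : 1 ≤ j ∧ j ≤ n then v ⟨j - 1, by omega⟩ else 0

open Finset

lemma countP_ofFn {n : ℕ} (b : Fin n → ℝ) (P : ℝ → Prop) [DecidablePred P] :
    (List.ofFn b).countP (fun y => decide (P y)) =
      (Finset.univ.filter fun j => P (b j)).card := by
  rw [List.ofFn_eq_map, List.countP_map]
  rw [Finset.card_filter]
  simp only [List.countP_eq_length_filter, Fin.univ_def, Finset.sum]
  have : ∀ (l : List (Fin n)), (List.filter ((fun y => decide (P y)) ∘ b) l).length
      = (l.map (fun i => if P (b i) then 1 else 0)).sum := by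
    intro l
    induction l with
    | nil => simp
    | cons a t ih => by_cases h : P (b a) <;> simp [List.filter_cons, h, ih, Function.comp, Nat.add_comm]
  exact this _

section Kth

variable {n : ℕ} (b : Fin n → ℝ)

private lemma s_facts :
    ∃ s : List ℝ, s = (List.ofFn b).mergeSort (fun x y => decide (y ≤ x)) ∧
      s.Perm (List.ofFn b) ∧ s.length = n ∧
      (∀ (a c : ℕ) (_ : a < s.length) (_ : c < s.length), a < c → s[c] ≤ s[a]) := by
  refine ⟨_, rfl, List.mergeSort_perm _ _, ?_, ?_⟩
  · rw [(List.mergeSort_perm _ _).length_eq, List.length_ofFn]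
  · have hp := List.pairwise_mergeSort (le := fun x y : ℝ => decide (y ≤ x))
      (fun a b c h1 h2 => by simp at h1 h2 ⊢; linarith)
      (fun a b => by simp [le_total b a]) (List.ofFn b)
    rw [List.pairwise_iff_getElem] at hp
    intro a c ha hc hac
    simpa using hp a c ha hc hac

lemma kth_char {k : ℕ} (hk1 : 1 ≤ k) (hkn : k ≤ n) {x : ℝ}
    (h1 : k ≤ (Finset.univ.filter fun j => x ≤ b j).card)
    (h2 : (Finset.univ.filter fun j => x < b j).card ≤ k - 1) :
    kthHighest b k = x := by
  obtain ⟨s, hs, hperm, hlen, hanti⟩ := s_facts b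
  rw [← countP_ofFn b (fun y => x ≤ y), ← hperm.countP_eq] at h1
  rw [← countP_ofFn b (fun y => x < y), ← hperm.countP_eq] at h2
  have hklen : k - 1 < s.length := by omega
  have hkth : kthHighest b k = s[k-1] := by
    rw [kthHighest, ← hs, List.getD_eq_getElem _ _ hklen]
  -- upper bound: s[k-1] ≤ x
  have hub : s[k-1] ≤ x := by
    by_contra hlt
    push_neg at hlt
    have : k ≤ s.countP (fun y => decide (x < y)) := by
      calc k = (s.take k).length := by rw [List.length_take]; omega
        _ = (s.take k).countP (fun y => decide (x < y)) := by
            rw [eq_comm, List.countP_eq_length]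
            intro a ha
            rw [List.mem_iff_getElem] at ha
            obtain ⟨t, ht, rfl⟩ := ha
            have ht' : t < k := by
              have := List.length_take_le k s; rw [List.length_take] at ht; omega
            rw [List.getElem_take]
            simp only [decide_eq_true_eq]
            rcases Nat.lt_or_ge t (k-1) with h | h
            · exact lt_of_lt_of_le hlt (hanti t (k-1) (by omega) hklen h)
            · have : t = k - 1 := by omega
              subst this; exact hlt
        _ ≤ s.countP (fun y => decide (x < y)) := by
            conv_rhs => rw [← List.take_append_drop k s]
            rw [List.countP_append]; omega
    omega
  have hlb : x ≤ s[k-1] := by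
    by_contra hlt
    push_neg at hlt
    have : s.countP (fun y => decide (x ≤ y)) ≤ k - 1 := by
      conv_lhs => rw [← List.take_append_drop (k-1) s]
      rw [List.countP_append]
      have hdrop : (s.drop (k-1)).countP (fun y => decide (x ≤ y)) = 0 := by
        rw [List.countP_eq_zero]
        intro a ha
        rw [List.mem_iff_getElem] at ha
        obtain ⟨t, ht, rfl⟩ := ha
        rw [List.getElem_drop]
        simp only [decide_eq_true_eq, not_le]
        have hlt2 : k - 1 ≤ k - 1 + t := by omega
        have hlen2 : k - 1 + t < s.length := by
          rw [List.length_drop] at ht; omega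
        rcases Nat.eq_or_lt_of_le hlt2 with h | h
        · have he : s[k-1+t] = s[k-1] := by congr 1; omega
          rw [he]; exact hlt
        · exact lt_of_le_of_lt (hanti (k-1) (k-1+t) hklen hlen2 h) hlt
      have := List.countP_le_length (l := s.take (k-1)) (p := fun y => decide (x ≤ y))
      rw [List.length_take] at this
      omega
    omega
  rw [hkth]; linarith

lemma count_ge_kth {k : ℕ} (hk1 : 1 ≤ k) (hkn : k ≤ n) :
    k ≤ (Finset.univ.filter fun j => kthHighest b k ≤ b j).card := by
  obtain ⟨s, hs, hperm, hlen, hanti⟩ := s_facts b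
  have hklen : k - 1 < s.length := by omega
  have hkth : kthHighest b k = s[k-1] := by
    rw [kthHighest, ← hs, List.getD_eq_getElem _ _ hklen]
  rw [← countP_ofFn b (fun y => kthHighest b k ≤ y), ← hperm.countP_eq]
  calc k = (s.take k).length := by rw [List.length_take]; omega
    _ = (s.take k).countP (fun y => decide (kthHighest b k ≤ y)) := by
        rw [eq_comm, List.countP_eq_length]
        intro a ha
        rw [List.mem_iff_getElem] at ha
        obtain ⟨t, ht, rfl⟩ := ha
        have ht' : t < k := by rw [List.length_take] at ht; omega
        rw [List.getElem_take]
        simp only [decide_eq_true_eq]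
        rw [hkth]
        rcases Nat.lt_or_ge t (k-1) with h | h
        · exact hanti t (k-1) (by omega) hklen h
        · have : t = k - 1 := by omega
          subst this; exact le_refl _
    _ ≤ s.countP (fun y => decide (kthHighest b k ≤ y)) := by
        conv_rhs => rw [← List.take_append_drop k s]
        rw [List.countP_append]; omega

lemma count_gt_kth {k : ℕ} (hk1 : 1 ≤ k) (hkn : k ≤ n) :
    (Finset.univ.filter fun j => kthHighest b k < b j).card ≤ k - 1 := by
  obtain ⟨s, hs, hperm, hlen, hanti⟩ := s_facts b
  have hklen : k - 1 < s.length := by omega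
  have hkth : kthHighest b k = s[k-1] := by
    rw [kthHighest, ← hs, List.getD_eq_getElem _ _ hklen]
  rw [← countP_ofFn b (fun y => kthHighest b k < y), ← hperm.countP_eq]
  conv_lhs => rw [← List.take_append_drop (k-1) s]
  rw [List.countP_append]
  have hdrop : (s.drop (k-1)).countP (fun y => decide (kthHighest b k < y)) = 0 := by
    rw [List.countP_eq_zero]
    intro a ha
    rw [List.mem_iff_getElem] at ha
    obtain ⟨t, ht, rfl⟩ := ha
    rw [List.getElem_drop]
    simp only [decide_eq_true_eq, not_lt]
    rw [hkth]
    have hlen2 : k - 1 + t < s.length := by rw [List.length_drop] at ht; omega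
    rcases Nat.eq_or_lt_of_le (Nat.le_add_right (k-1) t) with h | h
    · have he : s[k-1+t] = s[k-1] := by congr 1; omega
      rw [he]
    · exact hanti (k-1) (k-1+t) hklen hlen2 h
  have := List.countP_le_length (l := s.take (k-1)) (p := fun y => decide (kthHighest b k < y))
  rw [List.length_take] at this
  omega

lemma kth_mono {j k : ℕ} (hj : 1 ≤ j) (hjk : j ≤ k) (hkn : k ≤ n) :
    kthHighest b k ≤ kthHighest b j := by
  obtain ⟨s, hs, hperm, hlen, hanti⟩ := s_facts b
  have hj' : j - 1 < s.length := by omega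
  have hk' : k - 1 < s.length := by omega
  rw [kthHighest, kthHighest, ← hs, List.getD_eq_getElem _ _ hj', List.getD_eq_getElem _ _ hk']
  rcases Nat.eq_or_lt_of_le (show j - 1 ≤ k - 1 by omega) with h | h
  · exact le_of_eq (by congr 1; omega)
  · exact hanti (j-1) (k-1) hj' hk' h

lemma kth_nonneg (hb : ∀ j, 0 ≤ b j) (k : ℕ) : 0 ≤ kthHighest b k := by
  obtain ⟨s, hs, hperm, hlen, hanti⟩ := s_facts b
  rw [kthHighest, ← hs]
  rcases Nat.lt_or_ge (k-1) s.length with h | h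
  · rw [List.getD_eq_getElem _ _ h]
    have : s[k-1] ∈ s := List.getElem_mem _
    have := hperm.mem_iff.mp this
    rw [List.mem_ofFn] at this
    obtain ⟨j, hj⟩ := this
    rw [← hj]; exact hb j
  · rw [List.getD_eq_default _ _ h]

end Kth

lemma card_filter_val_lt {n a : ℕ} (ha : a ≤ n) :
    (Finset.univ.filter fun j : Fin n => (j : ℕ) < a).card = a := by
  have he : (Finset.univ.filter fun j : Fin n => (j : ℕ) < a) =
      (Finset.range a).attachFin (fun m hm => lt_of_lt_of_le (Finset.mem_range.mp hm) ha) := by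
    ext j
    simp [Finset.mem_attachFin]
  rw [he, Finset.card_attachFin, Finset.card_range]

lemma card_filter_val_ge {n a : ℕ} (ha : a ≤ n) :
    (Finset.univ.filter fun j : Fin n => a ≤ (j : ℕ)).card = n - a := by
  have := Finset.card_filter_add_card_filter_not
    (s := (Finset.univ : Finset (Fin n))) (p := fun j : Fin n => (j : ℕ) < a)
  simp only [not_lt] at this
  rw [card_filter_val_lt ha] at this
  simp only [Finset.card_univ, Fintype.card_fin] at this
  omega

lemma card_filter_split {n : ℕ} (g : Fin n → ℝ) (j : Fin n) (P : ℝ → Prop) :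
    (Finset.univ.filter fun j' => P (g j')).card =
      ((Finset.univ.erase j).filter fun j' => P (g j')).card + (if P (g j) then 1 else 0) := by
  classical
  have h1 : (Finset.univ : Finset (Fin n)) = insert j (Finset.univ.erase j) := by
    rw [Finset.insert_erase (Finset.mem_univ j)]
  nth_rewrite 1 [h1]
  rw [Finset.filter_insert]
  by_cases h : P (g j)
  · rw [if_pos h, if_pos h, Finset.card_insert_of_notMem (by simp)]
  · rw [if_neg h, if_neg h, Nat.add_zero]

lemma card_filter_update {n : ℕ} (b : Fin n → ℝ) (j : Fin n) (x : ℝ) (P : ℝ → Prop) :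
    (Finset.univ.filter fun j' => P (Function.update b j x j')).card + (if P (b j) then 1 else 0) =
      (Finset.univ.filter fun j' => P (b j')).card + (if P x then 1 else 0) := by
  classical
  rw [card_filter_split (Function.update b j x) j P, card_filter_split b j P]
  have he : ((Finset.univ.erase j).filter fun j' => P (Function.update b j x j')) =
      ((Finset.univ.erase j).filter fun j' => P (b j')) := by
    apply Finset.filter_congr
    intro j' hj'
    rw [Function.update_of_ne (Finset.ne_of_mem_erase hj')]
  rw [he, Function.update_self]
  ring

lemma wins_unique {n : ℕ} {b : Fin n → ℝ} {i j : Fin n} (hi : wins b i) (hj : wins b j) :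
    i = j := by
  have h1 : b i = b j := le_antisymm (hj.1 i) (hi.1 j)
  exact le_antisymm (hi.2 j h1.symm) (hj.2 i h1)

lemma utility_loser {n : ℕ} {v b : Fin n → ℝ} {k : ℕ} {i j : Fin n}
    (hi : wins b i) (hj : j ≠ i) : utility v k b j = 0 := by
  rw [utility, if_neg]
  intro hw
  exact hj (wins_unique hw hi)

lemma max_eq_of_wins {n : ℕ} {b : Fin n → ℝ} {i : Fin n} (hn : 1 ≤ n) (hi : wins b i) :
    kthHighest b 1 = b i := by
  apply kth_char b le_rfl hn
  · have : i ∈ Finset.univ.filter fun j => b i ≤ b j := by simp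
    have := Finset.card_pos.mpr ⟨i, this⟩
    omega
  · have : (Finset.univ.filter fun j => b i < b j) = ∅ := by
      rw [Finset.filter_eq_empty_iff]
      intro j _
      exact not_lt.mpr (hi.1 j)
    rw [this]
    simp

lemma vIdx_eq {n : ℕ} (v : Fin n → ℝ) {j : ℕ} (h1 : 1 ≤ j) (h2 : j ≤ n) :
    vIdx v j = v ⟨j - 1, by omega⟩ := by
  rw [vIdx, dif_pos ⟨h1, h2⟩]

lemma vIdx_top {n : ℕ} (v : Fin n → ℝ) : vIdx v (n + 1) = 0 := by
  rw [vIdx, dif_neg]; omega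

lemma vIdx_nonneg {n : ℕ} (v : Fin n → ℝ) (hv : ∀ i, 0 < v i) (j : ℕ) : 0 ≤ vIdx v j := by
  rw [vIdx]
  split
  · exact (hv _).le
  · exact le_rfl

lemma price_all_zero {n k : ℕ} (hn : 1 ≤ n) (hk1 : 1 ≤ k) (hk : k ≤ n + 1)
    (c : Fin n → ℝ) (hc : ∀ j, c j = 0) : price k c = 0 := by
  have hchar : ∀ k', 1 ≤ k' → k' ≤ n → kthHighest c k' = 0 := by
    intro k' h1 h2
    apply kth_char c h1 h2
    · have : (Finset.univ.filter fun j => (0:ℝ) ≤ c j) = Finset.univ := by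
        rw [Finset.filter_eq_self]; intro j _; rw [hc j]
      rw [this, Finset.card_univ, Fintype.card_fin]; omega
    · have : (Finset.univ.filter fun j => (0:ℝ) < c j) = ∅ := by
        rw [Finset.filter_eq_empty_iff]; intro j _; rw [hc j]; exact lt_irrefl 0
      rw [this, Finset.card_empty]; omega
  rw [price]
  split
  · exact hchar 1 le_rfl hn
  · next h => exact hchar k hk1 (by omega)

lemma price_nonneg {n k : ℕ} (b : Fin n → ℝ) (hb : ∀ j, 0 ≤ b j) : 0 ≤ price k b := by
  rw [price]; split <;> exact kth_nonneg b hb _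

lemma price_le_value {n k : ℕ} (hn : 1 ≤ n) (hk1 : 1 ≤ k) (hk : k ≤ n + 1)
    {v b : Fin n → ℝ} (hvpos : ∀ i, 0 < v i)
    (hne : NashEq v k b) {i : Fin n} (hw : wins b i) : price k b ≤ v i := by
  have h0 := hne.2 i 0 le_rfl
  have hub : utility v k b i = v i - price k b := by rw [utility, if_pos hw]
  rw [hub] at h0
  by_cases hw' : wins (Function.update b i 0) i
  · have hall : ∀ j, Function.update b i 0 j = 0 := by
      intro j
      by_cases hj : j = i
      · subst hj; simp
      · have h1 := hw'.1 j
        rw [Function.update_self] at h1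
        rw [Function.update_of_ne hj] at h1 ⊢
        exact le_antisymm h1 (hne.1 j)
    have : utility v k (Function.update b i 0) i = v i := by
      rw [utility, if_pos hw', price_all_zero hn hk1 hk _ hall, sub_zero]
    rw [this] at h0
    have := hvpos i
    linarith
  · have : utility v k (Function.update b i 0) i = 0 := by rw [utility, if_neg hw']
    rw [this] at h0
    linarith

lemma wins_update_top {n : ℕ} {b : Fin n → ℝ} {i : Fin n} (j : Fin n) (hw : wins b i)
    {x : ℝ} (hx : b i < x) : wins (Function.update b j x) j := by
  constructor
  · intro j'
    rw [Function.update_self]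
    by_cases hj : j' = j
    · subst hj; rw [Function.update_self]
    · rw [Function.update_of_ne hj]
      exact le_of_lt (lt_of_le_of_lt (hw.1 j') hx)
  · intro j' hj'
    rw [Function.update_self] at hj'
    by_cases hj : j' = j
    · subst hj; exact le_rfl
    · rw [Function.update_of_ne hj] at hj'
      exact absurd hj' (ne_of_lt (lt_of_le_of_lt (hw.1 j') hx))

lemma price_update_top_high {n k : ℕ} (hk2 : 2 ≤ k) (hkn : k ≤ n)
    {b : Fin n → ℝ} {i j : Fin n} (hw : wins b i)
    (hjb : kthHighest b k < b j) :
    kthHighest (Function.update b j (b i + 1)) k = kthHighest b k := by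
  set q := kthHighest b k with hq
  have hqi : q ≤ b i := by
    rw [← max_eq_of_wins (by omega) hw]
    exact kth_mono b le_rfl (by omega) hkn
  apply kth_char _ (by omega) hkn
  · have h := card_filter_update b j (b i + 1) (fun y => q ≤ y)
    rw [if_pos (le_of_lt hjb), if_pos (by linarith)] at h
    have := count_ge_kth b (k := k) (by omega) hkn
    rw [← hq] at this
    omega
  · have h := card_filter_update b j (b i + 1) (fun y => q < y)
    rw [if_pos hjb, if_pos (by linarith)] at h
    have := count_gt_kth b (k := k) (by omega) hkn
    rw [← hq] at this
    omega

lemma price_update_top_low {n k : ℕ} (hk2 : 2 ≤ k) (hkn : k ≤ n)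
    {b : Fin n → ℝ} {i j : Fin n} (hw : wins b i)
    (hjb : b j ≤ kthHighest b k) :
    kthHighest (Function.update b j (b i + 1)) k = kthHighest b (k - 1) := by
  set q := kthHighest b k with hq
  set r := kthHighest b (k - 1) with hr
  have hqr : q ≤ r := kth_mono b (by omega) (by omega) hkn
  have hri : r ≤ b i := by
    rw [← max_eq_of_wins (by omega) hw]
    exact kth_mono b le_rfl (by omega) (by omega)
  apply kth_char _ (by omega) hkn
  · have h := card_filter_update b j (b i + 1) (fun y => r ≤ y)
    rw [if_pos (by linarith : r ≤ b i + 1)] at h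
    rcases eq_or_lt_of_le hqr with hqr' | hqr'
    · have := count_ge_kth b (k := k) (by omega) hkn
      rw [← hq] at this
      rw [← hqr'] at h
      by_cases hbj : q ≤ b j
      · rw [if_pos hbj] at h; rw [← hqr']; omega
      · rw [if_neg hbj] at h; rw [← hqr']; omega
    · have := count_ge_kth b (k := k - 1) (by omega) (by omega)
      rw [if_neg (by push_neg; linarith : ¬ r ≤ b j)] at h
      rw [← hr] at this
      omega
  · have h := card_filter_update b j (b i + 1) (fun y => r < y)
    rw [if_neg (by push_neg; linarith : ¬ r < b j), if_pos (by linarith : r < b i + 1)] at h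
    have := count_gt_kth b (k := k - 1) (by omega) (by omega)
    rw [← hr] at this
    omega

lemma forward_first {n : ℕ} (hn : 2 ≤ n) (v : Fin n → ℝ) (hv : StrictAnti v)
    (hvpos : ∀ i, 0 < v i) {b : Fin n → ℝ} (hne : NashEq v (n+1) b) {i : Fin n}
    (hw : wins b i) :
    i = ⟨0, by omega⟩ ∧ v ⟨1, by omega⟩ ≤ price (n+1) b ∧ price (n+1) b ≤ v i := by
  have hpr : price (n+1) b = b i := by
    rw [price, if_pos rfl, max_eq_of_wins (by omega) hw]
  have hple : price (n+1) b ≤ v i :=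
    price_le_value (by omega) (by omega) le_rfl hvpos hne hw
  have key : ∀ j, j ≠ i → v j ≤ b i := by
    intro j hj
    by_contra hcon
    push_neg at hcon
    set x := (b i + v j) / 2 with hx
    have hx1 : b i < x := by rw [hx]; linarith
    have hx2 : x < v j := by rw [hx]; linarith
    have hx0 : 0 ≤ x := le_of_lt (lt_of_le_of_lt (hne.1 i) hx1)
    have hd := hne.2 j x hx0
    rw [utility_loser hw hj] at hd
    have hwc : wins (Function.update b j x) j := wins_update_top j hw hx1
    rw [utility, if_pos hwc, price, if_pos rfl, max_eq_of_wins (by omega) hwc,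
      Function.update_self] at hd
    linarith
  have hi0 : i = ⟨0, by omega⟩ := by
    by_contra hcon
    have h1 : v ⟨0, by omega⟩ ≤ b i := key _ (fun h => hcon h.symm)
    have h2 : v i < v ⟨0, by omega⟩ := by
      apply hv
      rw [Fin.lt_def]
      simp only []
      rcases Nat.eq_or_lt_of_le (Nat.zero_le i.val) with h | h
      · exact absurd (Fin.ext h.symm) hcon
      · exact h
    rw [hpr] at hple
    linarith
  refine ⟨hi0, ?_, hple⟩
  rw [hpr]
  apply key
  rw [hi0]
  intro h
  have := Fin.mk.injEq (n := n) 1 (by omega) 0 (by omega) ▸ h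
  simp [Fin.ext_iff] at h

lemma forward_mid {n k : ℕ} (hn : 2 ≤ n) (hk3 : 3 ≤ k) (hkn : k ≤ n)
    (v : Fin n → ℝ) (hv : StrictAnti v) (hvpos : ∀ i, 0 < v i)
    {b : Fin n → ℝ} (hne : NashEq v k b) {i : Fin n} (hw : wins b i) :
    vIdx v (n + 3 - k) < v i ∧ vIdx v (n + 3 - k) ≤ kthHighest b k := by
  set q := kthHighest b k with hq
  set r := kthHighest b (k-1) with hr
  set m := n + 3 - k with hm
  have hm3 : 3 ≤ m := by omega
  have hmn : m ≤ n := by omega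
  have hvw : vIdx v m = v ⟨m - 1, by omega⟩ := vIdx_eq v (by omega) hmn
  set w := v ⟨m - 1, by omega⟩ with hwdef
  have hpr : price k b = q := by rw [price, if_neg (by omega), hq]
  have hqv : q ≤ v i := by
    rw [← hpr]; exact price_le_value (by omega) (by omega) (by omega) hvpos hne hw
  -- key deviation facts for losers
  have key : ∀ j, j ≠ i → (q < b j → v j ≤ q) ∧ (b j ≤ q → v j ≤ r) := by
    intro j hj
    have hx0 : (0:ℝ) ≤ b i + 1 := by have := hne.1 i; linarith
    have hd := hne.2 j (b i + 1) hx0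
    rw [utility_loser hw hj] at hd
    have hwc : wins (Function.update b j (b i + 1)) j :=
      wins_update_top j hw (by linarith)
    rw [utility, if_pos hwc, price, if_neg (by omega)] at hd
    constructor
    · intro hbj
      rw [price_update_top_high (by omega) hkn hw (hq ▸ hbj)] at hd
      rw [hq]; linarith
    · intro hbj
      rw [price_update_top_low (by omega) hkn hw (hq ▸ hbj)] at hd
      rw [hr]; linarith
  by_contra hcon
  rw [not_and_or] at hcon
  -- find a set of m-1 losers with value > q
  have hT : ∃ T : Finset (Fin n), m - 1 ≤ T.card ∧ ∀ j ∈ T, j ≠ i ∧ q < v j := by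
    by_cases hA : q < w
    · refine ⟨(Finset.univ.filter fun j : Fin n => (j:ℕ) < m).erase i, ?_, ?_⟩
      · have h1 := Finset.pred_card_le_card_erase
          (s := Finset.univ.filter fun j : Fin n => (j:ℕ) < m) (a := i)
        rw [card_filter_val_lt hmn] at h1
        omega
      · intro j hjmem
        obtain ⟨hji, hjm⟩ := Finset.mem_erase.mp hjmem
        refine ⟨hji, lt_of_lt_of_le hA ?_⟩
        rw [hwdef]
        apply hv.antitone
        rw [Fin.le_def]
        have := (Finset.mem_filter.mp hjm).2
        simp only []
        omega
    · push_neg at hA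
      have hviw : v i ≤ w := by
        rcases hcon with h | h
        · push_neg at h; rw [hvw] at h; exact h
        · exfalso; exact h (by rw [hvw]; exact hA)
      have hqw : q = w := le_antisymm (le_trans hqv hviw) hA
      have hiw : v i = w := le_antisymm hviw (hqw ▸ hqv)
      have him : i = ⟨m - 1, by omega⟩ := hv.injective hiw
      refine ⟨Finset.univ.filter fun j : Fin n => (j:ℕ) < m - 1, ?_, ?_⟩
      · rw [card_filter_val_lt (by omega)]
      · intro j hjmem
        have hjval := (Finset.mem_filter.mp hjmem).2
        constructor
        · intro hje
          rw [him] at hje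
          have : (j:ℕ) = m - 1 := by rw [hje]
          omega
        · rw [hqw, hwdef]
          apply hv
          rw [Fin.lt_def]
          simpa using hjval
  obtain ⟨T, hTcard, hTmem⟩ := hT
  have hTb : ∀ j ∈ T, b j ≤ q ∧ v j ≤ r := by
    intro j hj
    obtain ⟨hji, hjv⟩ := hTmem j hj
    by_cases hbj : q < b j
    · exact absurd ((key j hji).1 hbj) (by push_neg; exact hjv)
    · push_neg at hbj
      exact ⟨hbj, (key j hji).2 hbj⟩
  have hqr : q < r := by
    have hTne : T.Nonempty := Finset.card_pos.mp (by omega)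
    obtain ⟨j0, hj0⟩ := hTne
    exact lt_of_lt_of_le (hTmem j0 hj0).2 (hTb j0 hj0).2
  have hFcard : k - 1 ≤ (Finset.univ.filter fun j => r ≤ b j).card := by
    have := count_ge_kth b (k := k - 1) (by omega) (by omega)
    rw [← hr] at this
    exact this
  have hsub : (Finset.univ.filter fun j => r ≤ b j) ⊆ Finset.univ \ T := by
    intro j hjmem
    rw [Finset.mem_sdiff]
    refine ⟨Finset.mem_univ j, fun hjT => ?_⟩
    have h1 := (Finset.mem_filter.mp hjmem).2
    have h2 := (hTb j hjT).1
    linarith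
  have := Finset.card_le_card hsub
  rw [Finset.card_sdiff_of_subset (Finset.subset_univ T), Finset.card_univ, Fintype.card_fin] at this
  omega

lemma backward_first {n : ℕ} (hn : 2 ≤ n) (v : Fin n → ℝ) (hv : StrictAnti v)
    (hvpos : ∀ i, 0 < v i) (p : ℝ) (h2p : v ⟨1, by omega⟩ ≤ p) (hp1 : p ≤ v ⟨0, by omega⟩) :
    ∃ b : Fin n → ℝ, NashEq v (n+1) b ∧ wins b ⟨0, by omega⟩ ∧ price (n+1) b = p := by
  have hp0 : 0 < p := lt_of_lt_of_le (hvpos _) h2p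
  set b : Fin n → ℝ := fun j => if (j:ℕ) ≤ 1 then p else 0 with hb
  have hb0 : b ⟨0, by omega⟩ = p := by simp [hb]
  have hb1 : b ⟨1, by omega⟩ = p := by simp [hb]
  have hble : ∀ j, b j ≤ p := by
    intro j; rw [hb]; dsimp only; split
    · exact le_rfl
    · exact hp0.le
  have hbnn : ∀ j, 0 ≤ b j := by
    intro j; rw [hb]; dsimp only; split
    · exact hp0.le
    · exact le_rfl
  have hwin : wins b ⟨0, by omega⟩ := by
    constructor
    · intro j; rw [hb0]; exact hble j
    · intro j _; exact Fin.mk_le_of_le_val (Nat.zero_le _)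
  have hpr : price (n+1) b = p := by
    rw [price, if_pos rfl, max_eq_of_wins (by omega) hwin, hb0]
  refine ⟨b, ⟨hbnn, ?_⟩, hwin, hpr⟩
  intro d x hx
  set c := Function.update b d x with hc
  by_cases hwc : wins c d
  · have hprc : price (n+1) c = x := by
      rw [price, if_pos rfl, max_eq_of_wins (by omega) hwc, hc, Function.update_self]
    rw [utility, if_pos hwc, hprc]
    by_cases hd0 : d = ⟨0, by omega⟩
    · have hx1 : p ≤ x := by
        have h1 := hwc.1 ⟨1, by omega⟩
        rw [hc, Function.update_self, Function.update_of_ne (by rw [hd0]; intro h; simpa [Fin.ext_iff] using h), hb1] at h1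
        exact h1
      rw [utility, if_pos (hd0 ▸ hwin), hpr, hd0]
      linarith
    · have hxgt : p < x := by
        have h1 := hwc.1 ⟨0, by omega⟩
        rw [hc, Function.update_self,
          Function.update_of_ne (fun h => hd0 h.symm), hb0] at h1
        rcases lt_or_eq_of_le h1 with h | h
        · exact h
        · exfalso
          have h2 := hwc.2 ⟨0, by omega⟩
          rw [hc, Function.update_self,
            Function.update_of_ne (fun h' => hd0 h'.symm), hb0] at h2
          have h3 := h2 h
          rw [Fin.le_def] at h3
          refine hd0 ?_
          rw [Fin.ext_iff]
          simp only [Fin.val_mk] at h3 ⊢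
          omega
      have hdval : 1 ≤ (d:ℕ) := by
        by_contra h
        refine hd0 ?_
        rw [Fin.ext_iff]
        simp only [Fin.val_mk]
        omega
      have hvd : v d ≤ v ⟨1, by omega⟩ := by
        apply hv.antitone
        rw [Fin.le_def]
        exact hdval
      rw [utility_loser hwin hd0]
      nlinarith
  · rw [utility, if_neg hwc]
    by_cases hd0 : d = ⟨0, by omega⟩
    · rw [utility, if_pos (hd0 ▸ hwin), hpr, hd0]
      linarith
    · rw [utility_loser hwin hd0]

lemma backward_mid {n k : ℕ} (hn : 2 ≤ n) (hk2 : 2 ≤ k) (hkn : k ≤ n)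
    (v : Fin n → ℝ) (hv : StrictAnti v) (hvpos : ∀ i, 0 < v i) (i : Fin n) (p : ℝ)
    (hip : (i:ℕ) < n + 2 - k) (hp0 : 0 ≤ p) (hpv : p ≤ v i)
    (hpw : ∀ j : Fin n, n + 2 - k ≤ (j:ℕ) → v j ≤ p) :
    ∃ b : Fin n → ℝ, NashEq v k b ∧ wins b i ∧ price k b = p := by
  set t := n + 2 - k with ht
  have ht2 : 2 ≤ t := by omega
  have htn : t ≤ n := by omega
  set B := v ⟨0, by omega⟩ + 1 with hB
  have hv0 : ∀ j, v j ≤ v ⟨0, by omega⟩ := by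
    intro j
    apply hv.antitone
    rw [Fin.le_def]
    exact Nat.zero_le _
  have hpB : p < B := by have := hv0 i; rw [hB]; linarith
  have h0B : (0:ℝ) < B := lt_of_le_of_lt hp0 hpB
  set j0 : Fin n := ⟨if (i:ℕ) = 0 then 1 else 0, by split <;> omega⟩ with hj0
  have hj0val : (j0:ℕ) = if (i:ℕ) = 0 then 1 else 0 := rfl
  have hj0i : j0 ≠ i := by
    intro he
    have h2 := congrArg Fin.val he
    rw [hj0val] at h2
    split at h2 <;> omega
  have hj0t : (j0:ℕ) < t := by
    rw [hj0val]; split <;> omega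
  set b : Fin n → ℝ :=
    fun j => if j = i then B else if t ≤ (j:ℕ) then B else if j = j0 then p else 0 with hb
  have hbi : b i = B := by rw [hb]; simp
  have hbj0 : b j0 = p := by
    rw [hb]; dsimp only
    rw [if_neg hj0i, if_neg (by omega), if_pos rfl]
  have hbhigh : ∀ j : Fin n, t ≤ (j:ℕ) → b j = B := by
    intro j hj
    rw [hb]; dsimp only
    rw [if_neg (fun he => by rw [he] at hj; omega), if_pos hj]
  have hblow : ∀ j : Fin n, j ≠ i → j ≠ j0 → (j:ℕ) < t → b j = 0 := by
    intro j h1 h2 h3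
    rw [hb]; dsimp only
    rw [if_neg h1, if_neg (by omega), if_neg h2]
  have hble : ∀ j, b j ≤ B := by
    intro j
    rw [hb]; dsimp only
    split
    · exact le_rfl
    · split
      · exact le_rfl
      · split
        · exact hpB.le
        · exact h0B.le
  have hbnn : ∀ j, 0 ≤ b j := by
    intro j
    rw [hb]; dsimp only
    split
    · exact h0B.le
    · split
      · exact h0B.le
      · split
        · exact hp0
        · exact le_rfl
  -- the co-bidder index set
  have hcardhigh : (Finset.univ.filter fun j : Fin n => t ≤ (j:ℕ)).card = k - 2 := by
    rw [card_filter_val_ge htn]; omega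
  have hinotmem : i ∉ (Finset.univ.filter fun j : Fin n => t ≤ (j:ℕ)) := by
    rw [Finset.mem_filter]; push_neg; intro _; omega
  have hj0notmem : j0 ∉ (Finset.univ.filter fun j : Fin n => t ≤ (j:ℕ)) := by
    rw [Finset.mem_filter]; push_neg; intro _; omega
  -- price lemma A
  have priceA : ∀ (d : Fin n) (x : ℝ), (d = i ∨ t ≤ (d:ℕ)) → p ≤ x →
      kthHighest (Function.update b d x) k = p := by
    intro d x hd hpx
    have hdj0 : d ≠ j0 := by
      rcases hd with h | h
      · rw [h]; exact fun he => hj0i he.symm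
      · intro he; rw [he] at h; omega
    apply kth_char _ (by omega) hkn
    · -- at least k bids ≥ p
      set S : Finset (Fin n) :=
        insert i (insert j0 (Finset.univ.filter fun j : Fin n => t ≤ (j:ℕ))) with hS
      have hScard : S.card = k := by
        rw [hS, Finset.card_insert_of_notMem, Finset.card_insert_of_notMem hj0notmem,
          hcardhigh]
        · omega
        · rw [Finset.mem_insert]
          push_neg
          exact ⟨fun he => hj0i he.symm, hinotmem⟩
      have hSsub : S ⊆ Finset.univ.filter fun j => p ≤ Function.update b d x j := by
        intro j hj
        rw [Finset.mem_filter]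
        refine ⟨Finset.mem_univ j, ?_⟩
        by_cases hjd : j = d
        · rw [hjd, Function.update_self]; exact hpx
        · rw [Function.update_of_ne hjd]
          rw [hS, Finset.mem_insert, Finset.mem_insert] at hj
          rcases hj with h | h | h
          · rw [h, hbi]; exact hpB.le
          · rw [h, hbj0]
          · rw [hbhigh j (Finset.mem_filter.mp h).2]; exact hpB.le
      calc k = S.card := hScard.symm
        _ ≤ _ := Finset.card_le_card hSsub
    · -- at most k-1 bids > p
      set S' : Finset (Fin n) :=
        insert i (Finset.univ.filter fun j : Fin n => t ≤ (j:ℕ)) with hS'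
      have hS'card : S'.card = k - 1 := by
        rw [hS', Finset.card_insert_of_notMem hinotmem, hcardhigh]; omega
      have hsub : (Finset.univ.filter fun j => p < Function.update b d x j) ⊆ S' := by
        intro j hj
        rw [Finset.mem_filter] at hj
        rw [hS', Finset.mem_insert, Finset.mem_filter]
        by_cases hji : j = i
        · exact Or.inl hji
        by_cases hjt : t ≤ (j:ℕ)
        · exact Or.inr ⟨Finset.mem_univ j, hjt⟩
        exfalso
        have hjd : j ≠ d := by
          rcases hd with h | h
          · rw [h]; exact hji
          · intro he; rw [he] at hjt; exact hjt h
        rw [Function.update_of_ne hjd] at hj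
        by_cases hjj0 : j = j0
        · rw [hjj0, hbj0] at hj; linarith [hj.2]
        · rw [hblow j hji hjj0 (by omega)] at hj; linarith [hj.2]
      calc (Finset.univ.filter fun j => p < Function.update b d x j).card
          ≤ S'.card := Finset.card_le_card hsub
        _ = k - 1 := hS'card
  -- price lemma B
  have priceB : ∀ (d : Fin n) (x : ℝ), d ≠ i → (d:ℕ) < t → B ≤ x →
      kthHighest (Function.update b d x) k = B := by
    intro d x hdi hdt hBx
    apply kth_char _ (by omega) hkn
    · set S : Finset (Fin n) :=
        insert d (insert i (Finset.univ.filter fun j : Fin n => t ≤ (j:ℕ))) with hS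
      have hScard : S.card = k := by
        rw [hS, Finset.card_insert_of_notMem, Finset.card_insert_of_notMem hinotmem]
        · rw [hcardhigh]; omega
        · rw [Finset.mem_insert]
          push_neg
          refine ⟨hdi, ?_⟩
          rw [Finset.mem_filter]; push_neg; intro _; omega
      have hSsub : S ⊆ Finset.univ.filter fun j => B ≤ Function.update b d x j := by
        intro j hj
        rw [Finset.mem_filter]
        refine ⟨Finset.mem_univ j, ?_⟩
        rw [hS, Finset.mem_insert, Finset.mem_insert] at hj
        by_cases hjd : j = d
        · rw [hjd, Function.update_self]; exact hBx
        · rw [Function.update_of_ne hjd]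
          rcases hj with h | h | h
          · exact absurd h hjd
          · rw [h, hbi]
          · rw [hbhigh j (Finset.mem_filter.mp h).2]
      calc k = S.card := hScard.symm
        _ ≤ _ := Finset.card_le_card hSsub
    · have hsub : (Finset.univ.filter fun j => B < Function.update b d x j) ⊆ {d} := by
        intro j hj
        rw [Finset.mem_filter] at hj
        rw [Finset.mem_singleton]
        by_contra hjd
        rw [Function.update_of_ne hjd] at hj
        linarith [hble j, hj.2]
      calc (Finset.univ.filter fun j => B < Function.update b d x j).card
          ≤ ({d} : Finset (Fin n)).card := Finset.card_le_card hsub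
        _ = 1 := Finset.card_singleton d
        _ ≤ k - 1 := by omega
  have hwin : wins b i := by
    constructor
    · intro j; rw [hbi]; exact hble j
    · intro j hj
      by_contra hcon
      push_neg at hcon
      have hji : j ≠ i := ne_of_lt hcon
      have hjt : ¬ t ≤ (j:ℕ) := by
        intro h
        have := Fin.lt_def.mp hcon
        omega
      rw [hbi] at hj
      by_cases hjj0 : j = j0
      · rw [hjj0, hbj0] at hj; linarith
      · rw [hblow j hji hjj0 (by omega)] at hj; linarith
  have hpr : price k b = p := by
    have : Function.update b i (b i) = b := Function.update_eq_self i b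
    rw [price, if_neg (by omega), ← this, hbi]
    exact priceA i B (Or.inl rfl) hpB.le
  refine ⟨b, ⟨hbnn, ?_⟩, hwin, hpr⟩
  intro d x hx
  set c := Function.update b d x with hc
  by_cases hwc : wins c d
  · by_cases hdi : d = i
    · subst hdi
      have hpx : p ≤ x := by
        have h1 := hwc.1 j0
        rw [hc, Function.update_self, Function.update_of_ne hj0i, hbj0] at h1
        exact h1
      have : price k c = p := by
        rw [price, if_neg (by omega), hc]
        exact priceA d x (Or.inl rfl) hpx
      rw [utility, if_pos hwc, this, utility, if_pos hwin, hpr]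
    · have hBx : B ≤ x := by
        have h1 := hwc.1 i
        rw [hc, Function.update_self, Function.update_of_ne (fun h => hdi h.symm), hbi] at h1
        exact h1
      rw [utility_loser hwin hdi]
      by_cases hdt : t ≤ (d:ℕ)
      · have : price k c = p := by
          rw [price, if_neg (by omega), hc]
          exact priceA d x (Or.inr hdt) (le_trans hpB.le hBx)
        rw [utility, if_pos hwc, this]
        have := hpw d (by omega)
        linarith
      · have : price k c = B := by
          rw [price, if_neg (by omega), hc]
          exact priceB d x hdi (by omega) hBx
        rw [utility, if_pos hwc, this]
        linarith [hv0 d, hB.le, hB.ge]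
  · rw [utility, if_neg hwc]
    by_cases hdi : d = i
    · rw [hdi, utility, if_pos hwin, hpr]
      have := hpv
      rw [hdi] at *
      linarith
    · rw [utility_loser hwin hdi]

theorem stmt10 {n : ℕ} (hn : 2 ≤ n) (v : Fin n → ℝ) (hv : StrictAnti v) (hvpos : ∀ i, 0 < v i) (k : ℕ) (hk2 : 2 ≤ k) (hkn : k ≤ n + 1)
    (i : Fin n) (p : ℝ) :
    (∃ b : Fin n → ℝ, NashEq v k b ∧ wins b i ∧ price k b = p) ↔
    (vIdx v (n + 3 - k) < v i ∧ vIdx v (n + 3 - k) ≤ p ∧ p ≤ v i) := by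
  by_cases hkn1 : k = n + 1
  · subst hkn1
    have hm2 : n + 3 - (n + 1) = 2 := by omega
    have hvidx : vIdx v (n + 3 - (n + 1)) = v ⟨1, by omega⟩ := by
      rw [hm2, vIdx_eq v (by omega) hn]
    rw [hvidx]
    constructor
    · rintro ⟨b, hne, hw, hp⟩
      obtain ⟨hi0, h2p, hple⟩ := forward_first hn v hv hvpos hne hw
      subst hp
      refine ⟨?_, h2p, hple⟩
      rw [hi0]
      apply hv
      rw [Fin.lt_def]
      simp only [Fin.val_mk]
      omega
    · rintro ⟨h1, h2, h3⟩
      have hi0 : i = ⟨0, by omega⟩ := by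
        have := hv.lt_iff_gt.mp h1
        rw [Fin.lt_def] at this
        simp only [Fin.val_mk] at this
        exact Fin.ext (by simp only [Fin.val_mk]; omega)
      obtain ⟨b, hne, hw, hp⟩ := backward_first hn v hv hvpos p h2 (hi0 ▸ h3)
      exact ⟨b, hne, hi0 ▸ hw, hp⟩
  · have hkn' : k ≤ n := by omega
    by_cases hk2' : k = 2
    · subst hk2'
      have hm2 : n + 3 - 2 = n + 1 := by omega
      have hvidx : vIdx v (n + 3 - 2) = 0 := by rw [hm2, vIdx_top]
      rw [hvidx]
      constructor
      · rintro ⟨b, hne, hw, hp⟩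
        refine ⟨hvpos i, ?_, ?_⟩
        · rw [← hp]
          exact price_nonneg b hne.1
        · rw [← hp]
          exact price_le_value (by omega) (by omega) (by omega) hvpos hne hw
      · rintro ⟨h1, h2, h3⟩
        apply backward_mid hn le_rfl hkn' v hv hvpos i p ?_ h2 h3 ?_
        · have := i.isLt; omega
        · intro j hj
          have := j.isLt; omega
    · have hk3 : 3 ≤ k := by omega
      have hvidx : vIdx v (n + 3 - k) = v ⟨n + 2 - k, by omega⟩ := by
        rw [vIdx_eq v (by omega) (by omega)]
        congr 1
        exact Fin.ext (by simp only [Fin.val_mk]; omega)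
      constructor
      · rintro ⟨b, hne, hw, hp⟩
        obtain ⟨hA, hB⟩ := forward_mid hn hk3 hkn' v hv hvpos hne hw
        have hpk : p = kthHighest b k := by
          rw [← hp, price, if_neg hkn1]
        refine ⟨hA, ?_, ?_⟩
        · rw [hpk]; exact hB
        · rw [← hp]
          exact price_le_value (by omega) (by omega) (by omega) hvpos hne hw
      · rintro ⟨h1, h2, h3⟩
        apply backward_mid hn hk2 hkn' v hv hvpos i p ?_ ?_ h3 ?_
        · rw [hvidx] at h1
          have := hv.lt_iff_gt.mp h1
          rw [Fin.lt_def] at this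
          simp only [Fin.val_mk] at this
          omega
        · exact le_trans (vIdx_nonneg v hvpos _) h2
        · intro j hj
          rw [hvidx] at h2
          refine le_trans ?_ h2
          apply hv.antitone
          rw [Fin.le_def]
          simp only [Fin.val_mk]
          omega
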